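/- The multiset Eulerian polynomial is invariant under permuting the multiplicities: for any 𝐦 = (m_1,...,m_n) and any permutation σ of {1,...,n}, A_{(m_1,...,m_n)}(x) = A_{(m_{σ(1)},...,m_{σ(n)})}(x). -/

import Mathlib

open MvPolynomial

/-- Number of descents in `a :: rest`, counting consecutive pairs. -/
def desAux : List ℕ → ℕ
  | a :: b :: t => (if b < a then 1 else 0) + desAux (b :: t)
  | _ => 0

/-- The descent number of a word `w = π₁…π_m`, with the boundary convention
`π₀ = π_{m+1} = 0`. -/
def des (w : List ℕ) : ℕ := desAux (0 :: (w ++ [0]))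

/-- The list of all distinct arrangements (multipermutations) of a multiset. -/
noncomputable def arrangements (M : Multiset ℕ) : List (List ℕ) :=
  M.toList.permutations.dedup

/-- The multiset `{1^{m₁}, 2^{m₂}, …, n^{m_n}}` encoded by the list of
multiplicities `ms = [m₁, …, m_n]`. -/
def msetOf (ms : List ℕ) : Multiset ℕ :=
  ((List.range ms.length).flatMap fun i => List.replicate (ms.getD i 0) (i + 1) : List ℕ)

/-- The homogenized multiset Eulerian polynomial
`A_𝐦(x,y) = Σ_π x^{des π} y^{m+1-des π}`. -/
noncomputable def Abi (ms : List ℕ) : MvPolynomial (Fin 2) ℚ :=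
  ((arrangements (msetOf ms)).map fun w =>
    X 0 ^ des w * X 1 ^ ((msetOf ms).card + 1 - des w)).sum

/-- The multiset Eulerian polynomial `A_𝐦(x) = Σ_π x^{des π}`. -/
noncomputable def Auni (ms : List ℕ) : Polynomial ℚ :=
  ((arrangements (msetOf ms)).map fun w => Polynomial.X ^ des w).sum

/-! ### Auxiliary development: a descent-preserving involution on words -/

/-- `sw v` swaps `v ↦ v+1` and everything else (in practice `v+1`) to `v`.
It is only ever applied to elements of `{v, v+1}`. -/
def sw (v x : ℕ) : ℕ := if x = v then v + 1 else v

/-- The "full" swap of the values `v` and `v+1`, fixing everything else. -/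
def swF (v x : ℕ) : ℕ := if x = v then v + 1 else if x = v + 1 then v else x

/-- Reverse-complement of a `{v,v+1}`-run. -/
def rc (v : ℕ) (r : List ℕ) : List ℕ := r.reverse.map (sw v)

/-- The run predicate: membership in `{v, v+1}`. -/
def rp (v : ℕ) (x : ℕ) : Bool := x == v || x == v + 1

/-- The involution on words: reverse-complement each maximal `{v,v+1}`-run. -/
def phi (v : ℕ) (w : List ℕ) : List ℕ :=
  match h : w.dropWhile (rp v) with
  | [] => rc v w
  | c :: t => rc v (w.takeWhile (rp v)) ++ c :: phi v t
termination_by w.length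
decreasing_by
  have h1 : (w.dropWhile (rp v)).length ≤ w.length :=
    (List.dropWhile_sublist (rp v)).length_le
  rw [h] at h1
  simp at h1 ⊢
  omega

theorem phi_eq1 {v : ℕ} {w : List ℕ} (h : w.dropWhile (rp v) = []) : phi v w = rc v w := by
  rw [phi, h]

theorem phi_nil (v : ℕ) : phi v [] = [] := by
  rw [phi_eq1 (List.dropWhile_nil (p := rp v))]; rfl

theorem phi_eq2 {v : ℕ} {w : List ℕ} {c t} (h : w.dropWhile (rp v) = c :: t) :
    phi v w = rc v (w.takeWhile (rp v)) ++ c :: phi v t := by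
  rw [phi, h]

theorem rp_iff {v x : ℕ} : rp v x = true ↔ x = v ∨ x = v + 1 := by
  simp [rp]

theorem desAux_append (a : ℕ) (l₂ : List ℕ) :
    ∀ l₁ : List ℕ, desAux (l₁ ++ a :: l₂) = desAux (l₁ ++ [a]) + desAux (a :: l₂)
  | [] => by simp [desAux]
  | [x] => by simp [desAux]
  | x :: y :: t => by
    have ih : desAux (y :: (t ++ a :: l₂)) = desAux (y :: (t ++ [a])) + desAux (a :: l₂) :=
      desAux_append a l₂ (y :: t)
    show (if y < x then 1 else 0) + desAux (y :: (t ++ a :: l₂)) =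
      ((if y < x then 1 else 0) + desAux (y :: (t ++ [a]))) + desAux (a :: l₂)
    omega

theorem rc_mem (v : ℕ) (r : List ℕ) : ∀ x ∈ rc v r, x = v ∨ x = v + 1 := by
  intro x hx
  simp only [rc, List.mem_map] at hx
  obtain ⟨y, -, rfl⟩ := hx
  unfold sw; split <;> simp

theorem desAux_rc (v : ℕ) :
    ∀ r : List ℕ, (∀ x ∈ r, x = v ∨ x = v + 1) → desAux (rc v r) = desAux r
  | [] , _ => rfl
  | [x], _ => rfl
  | x :: y :: t, h => by
    have hx : x = v ∨ x = v + 1 := h x (by simp)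
    have hy : y = v ∨ y = v + 1 := h y (by simp)
    have ih := desAux_rc v (y :: t) (fun z hz => h z (List.mem_cons_of_mem _ hz))
    have e1 : rc v (x :: y :: t) = (List.map (sw v) t.reverse) ++ (sw v y) :: [sw v x] := by
      simp [rc]
    have e2 : rc v (y :: t) = (List.map (sw v) t.reverse) ++ [sw v y] := by simp [rc]
    rw [e1, desAux_append, ← e2, ih]
    have h3 : desAux (sw v y :: [sw v x]) = if y < x then 1 else 0 := by
      show (if sw v x < sw v y then 1 else 0) + 0 = _
      rcases hx with rfl | rfl <;> rcases hy with rfl | rfl <;> simp [sw]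
    rw [h3]
    show _ = (if y < x then 1 else 0) + desAux (y :: t)
    omega

theorem desAux_back (v c : ℕ) (hc : c < v ∨ v + 1 < c) :
    ∀ r : List ℕ, (∀ x ∈ r, x = v ∨ x = v + 1) → r ≠ [] →
      desAux (r ++ [c]) = desAux r + (if c < v then 1 else 0)
  | [], _, hne => absurd rfl hne
  | [x], h, _ => by
    have hx : x = v ∨ x = v + 1 := h x (by simp)
    show (if c < x then 1 else 0) + 0 = 0 + (if c < v then 1 else 0)
    rcases hx with rfl | rfl <;> split_ifs <;> omega
  | x :: y :: t, h, _ => by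
    have ih := desAux_back v c hc (y :: t) (fun z hz => h z (List.mem_cons_of_mem _ hz))
      (by simp)
    show (if y < x then 1 else 0) + desAux (y :: (t ++ [c])) =
      ((if y < x then 1 else 0) + desAux (y :: t)) + (if c < v then 1 else 0)
    have e : desAux (y :: (t ++ [c])) = desAux (y :: t) + (if c < v then 1 else 0) := ih
    omega

theorem desAux_front (v s hd : ℕ) (hs : s < v ∨ v + 1 < s) (hhd : hd = v ∨ hd = v + 1)
    (tl : List ℕ) :
    desAux (s :: hd :: tl) = (if v + 1 < s then 1 else 0) + desAux (hd :: tl) := by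
  show (if hd < s then 1 else 0) + desAux (hd :: tl) = _
  have e : (if hd < s then (1:ℕ) else 0) = (if v + 1 < s then 1 else 0) := by
    rcases hhd with rfl | rfl <;> split_ifs <;> omega
  rw [e]

theorem desAux_run (v s c : ℕ) (hs : s < v ∨ v + 1 < s) (hc : c < v ∨ v + 1 < c)
    (r : List ℕ) (hr : ∀ x ∈ r, x = v ∨ x = v + 1) :
    desAux (s :: (rc v r ++ [c])) = desAux (s :: (r ++ [c])) := by
  rcases hrc : rc v r with _ | ⟨z, zs⟩
  · have hnil : r = [] := by
      have := congrArg List.length hrc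
      simpa [rc] using this
    subst hnil; rfl
  · rcases r with _ | ⟨hd, tl⟩
    · simp [rc] at hrc
    rw [← hrc]
    have hz : ∀ x ∈ rc v (hd :: tl), x = v ∨ x = v + 1 := rc_mem v _
    have L1 : desAux (s :: (rc v (hd :: tl) ++ [c])) =
        (if v + 1 < s then 1 else 0) + desAux (rc v (hd :: tl)) + (if c < v then 1 else 0) := by
      rw [hrc, List.cons_append]
      rw [desAux_front v s z hs (hz z (by rw [hrc]; simp)) (zs ++ [c])]
      have hb := desAux_back v c hc (z :: zs) (by rw [← hrc]; exact hz) (by simp)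
      rw [show (z :: zs) ++ [c] = z :: (zs ++ [c]) from rfl] at hb
      rw [hb]; omega
    have L2 : desAux (s :: ((hd :: tl) ++ [c])) =
        (if v + 1 < s then 1 else 0) + desAux (hd :: tl) + (if c < v then 1 else 0) := by
      rw [show (hd :: tl) ++ [c] = hd :: (tl ++ [c]) from rfl]
      rw [desAux_front v s hd hs (hr hd (by simp)) (tl ++ [c])]
      have hb := desAux_back v c hc (hd :: tl) hr (by simp)
      rw [show (hd :: tl) ++ [c] = hd :: (tl ++ [c]) from rfl] at hb
      rw [hb]; omega
    rw [L1, L2, desAux_rc v _ hr]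

theorem dropWhile_cons_false {p : ℕ → Bool} {c : ℕ} {t : List ℕ} :
    ∀ l : List ℕ, l.dropWhile p = c :: t → p c = false
  | [], h => by simp [List.dropWhile] at h
  | a :: l, h => by
    rw [List.dropWhile_cons] at h
    by_cases hp : p a
    · simp [hp] at h
      exact dropWhile_cons_false l h
    · simp [hp] at h
      obtain ⟨rfl, -⟩ := h
      simpa using hp

theorem takeWhile_middle (p : ℕ → Bool) (c : ℕ) (l₂ : List ℕ) :
    ∀ l₁ : List ℕ, (∀ x ∈ l₁, p x = true) → p c = false →
      (l₁ ++ c :: l₂).takeWhile p = l₁ ∧ (l₁ ++ c :: l₂).dropWhile p = c :: l₂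
  | [], _, hc => by simp [List.takeWhile_cons, List.dropWhile_cons, hc]
  | a :: l₁, h, hc => by
    have ha := h a (by simp)
    have ih := takeWhile_middle p c l₂ l₁ (fun x hx => h x (List.mem_cons_of_mem _ hx)) hc
    simp [List.takeWhile_cons, List.dropWhile_cons, ha, ih.1, ih.2]

theorem run_of_dropWhile_nil {v : ℕ} {w : List ℕ} (h : w.dropWhile (rp v) = []) :
    ∀ x ∈ w, x = v ∨ x = v + 1 := by
  intro x hx
  have htw : w.takeWhile (rp v) = w := by
    conv_rhs => rw [← List.takeWhile_append_dropWhile (p := rp v) (l := w), h]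
    simp
  exact rp_iff.mp (List.mem_takeWhile_imp (htw ▸ hx))

theorem rc_rc (v : ℕ) (r : List ℕ) (h : ∀ x ∈ r, x = v ∨ x = v + 1) : rc v (rc v r) = r := by
  simp only [rc, List.map_reverse, List.reverse_reverse, List.map_map]
  have : ∀ x ∈ r, (sw v ∘ sw v) x = id x := by
    intro x hx
    rcases h x hx with rfl | rfl <;> simp [sw]
  rw [List.map_congr_left this, List.map_id]

theorem length_lt_of_dropWhile {v : ℕ} {w : List ℕ} {c : ℕ} {t : List ℕ}
    (h : w.dropWhile (rp v) = c :: t) : t.length < w.length := by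
  have h1 : (w.dropWhile (rp v)).length ≤ w.length :=
    (List.dropWhile_sublist (rp v)).length_le
  rw [h] at h1
  simp at h1
  omega

theorem phi_phi (v : ℕ) : ∀ (n : ℕ) (w : List ℕ), w.length ≤ n → phi v (phi v w) = w := by
  intro n
  induction n with
  | zero =>
    intro w hw
    have : w = [] := List.length_eq_zero_iff.mp (Nat.le_zero.mp hw)
    subst this
    rw [phi_nil, phi_nil]
  | succ n ih =>
    intro w hw
    rcases hd : w.dropWhile (rp v) with _ | ⟨c, t⟩
    · have hrun := run_of_dropWhile_nil hd
      rw [phi_eq1 hd]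
      have hall : ∀ x ∈ rc v w, rp v x = true := fun x hx => rp_iff.mpr (rc_mem v w x hx)
      have hdn : (rc v w).dropWhile (rp v) = [] := by
        rw [List.dropWhile_eq_nil_iff]
        intro x hx
        simp [hall x hx]
      rw [phi_eq1 hdn, rc_rc v w hrun]
    · have hw_eq : w.takeWhile (rp v) ++ c :: t = w := by
        conv_rhs => rw [← List.takeWhile_append_dropWhile (p := rp v) (l := w), hd]
      have hc : rp v c = false := dropWhile_cons_false w hd
      have hlt := length_lt_of_dropWhile hd
      rw [phi_eq2 hd]
      set R := w.takeWhile (rp v) with hR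
      have hRall : ∀ x ∈ rc v R, rp v x = true := fun x hx => rp_iff.mpr (rc_mem v R x hx)
      obtain ⟨h1, h2⟩ := takeWhile_middle (rp v) c (phi v t) (rc v R) hRall hc
      rw [phi_eq2 h2, h1, rc_rc v R (fun x hx => rp_iff.mp (List.mem_takeWhile_imp hx)),
        ih t (by omega)]
      exact hw_eq

theorem phi_content (v : ℕ) : ∀ (n : ℕ) (w : List ℕ), w.length ≤ n →
    ((phi v w : List ℕ) : Multiset ℕ) = Multiset.map (swF v) (w : Multiset ℕ) := by
  intro n
  induction n with
  | zero =>
    intro w hw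
    have : w = [] := List.length_eq_zero_iff.mp (Nat.le_zero.mp hw)
    subst this
    rw [phi_nil]; rfl
  | succ n ih =>
    intro w hw
    have hrc_content : ∀ r : List ℕ, (∀ x ∈ r, x = v ∨ x = v + 1) →
        ((rc v r : List ℕ) : Multiset ℕ) = Multiset.map (swF v) (r : Multiset ℕ) := by
      intro r hr
      have : ((rc v r : List ℕ) : Multiset ℕ) = Multiset.map (sw v) (r.reverse : Multiset ℕ) := by
        simp [rc, Multiset.map_coe]
      rw [this]
      have hrev : ((r.reverse : List ℕ) : Multiset ℕ) = (r : Multiset ℕ) :=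
        Multiset.coe_eq_coe.mpr (List.reverse_perm r)
      rw [hrev]
      apply Multiset.map_congr rfl
      intro x hx
      rcases hr x (by simpa using hx) with rfl | rfl <;> simp [sw, swF]
    rcases hd : w.dropWhile (rp v) with _ | ⟨c, t⟩
    · rw [phi_eq1 hd]
      exact hrc_content w (run_of_dropWhile_nil hd)
    · have hw_eq : w.takeWhile (rp v) ++ c :: t = w := by
        conv_rhs => rw [← List.takeWhile_append_dropWhile (p := rp v) (l := w), hd]
      have hc : rp v c = false := dropWhile_cons_false w hd
      have hcc : swF v c = c := by
        simp [rp] at hc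
        simp [swF, hc.1, hc.2]
      have hlt := length_lt_of_dropWhile hd
      set R := w.takeWhile (rp v) with hR
      have hRrun : ∀ x ∈ R, x = v ∨ x = v + 1 :=
        fun x hx => rp_iff.mp (List.mem_takeWhile_imp hx)
      rw [phi_eq2 hd, ← hR]
      conv_rhs => rw [← hw_eq]
      have e1 : ((rc v R ++ c :: phi v t : List ℕ) : Multiset ℕ)
          = ((rc v R : List ℕ) : Multiset ℕ) + (c ::ₘ ((phi v t : List ℕ) : Multiset ℕ)) := by
        simp
      have e2 : ((R ++ c :: t : List ℕ) : Multiset ℕ)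
          = ((R : List ℕ) : Multiset ℕ) + (c ::ₘ ((t : List ℕ) : Multiset ℕ)) := by
        simp
      rw [e1, e2, Multiset.map_add, hrc_content R hRrun, ih t (by omega)]
      simp [hcc]

theorem des_phi (v : ℕ) (hv : 1 ≤ v) : ∀ (n : ℕ) (w : List ℕ), w.length ≤ n →
    ∀ s : ℕ, (s < v ∨ v + 1 < s) →
      desAux (s :: (phi v w ++ [0])) = desAux (s :: (w ++ [0])) := by
  intro n
  induction n with
  | zero =>
    intro w hw s _
    have : w = [] := List.length_eq_zero_iff.mp (Nat.le_zero.mp hw)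
    subst this
    rw [phi_nil]
  | succ n ih =>
    intro w hw s hs
    rcases hd : w.dropWhile (rp v) with _ | ⟨c, t⟩
    · rw [phi_eq1 hd]
      exact desAux_run v s 0 hs (Or.inl hv) w (run_of_dropWhile_nil hd)
    · have hw_eq : w.takeWhile (rp v) ++ c :: t = w := by
        conv_rhs => rw [← List.takeWhile_append_dropWhile (p := rp v) (l := w), hd]
      have hc' : rp v c = false := dropWhile_cons_false w hd
      have hc : c < v ∨ v + 1 < c := by
        simp [rp] at hc'
        omega
      have hlt := length_lt_of_dropWhile hd
      set R := w.takeWhile (rp v) with hR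
      have hRrun : ∀ x ∈ R, x = v ∨ x = v + 1 :=
        fun x hx => rp_iff.mp (List.mem_takeWhile_imp hx)
      rw [phi_eq2 hd, ← hR]
      conv_rhs => rw [← hw_eq]
      have eL : s :: ((rc v R ++ c :: phi v t) ++ [0])
          = (s :: rc v R) ++ c :: (phi v t ++ [0]) := by simp
      have eR : s :: ((R ++ c :: t) ++ [0]) = (s :: R) ++ c :: (t ++ [0]) := by simp
      rw [eL, eR, desAux_append c (phi v t ++ [0]) (s :: rc v R),
        desAux_append c (t ++ [0]) (s :: R)]
      have k1 : desAux ((s :: rc v R) ++ [c]) = desAux ((s :: R) ++ [c]) := by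
        rw [show (s :: rc v R) ++ [c] = s :: (rc v R ++ [c]) from rfl,
          show (s :: R) ++ [c] = s :: (R ++ [c]) from rfl]
        exact desAux_run v s c hs hc R hRrun
      have k2 : desAux (c :: (phi v t ++ [0])) = desAux (c :: (t ++ [0])) :=
        ih t (by omega) c hc
      rw [k1, k2]

theorem des_phi' (v : ℕ) (hv : 1 ≤ v) (w : List ℕ) : des (phi v w) = des w :=
  des_phi v hv w.length w le_rfl 0 (Or.inl hv)

theorem swF_swF (v x : ℕ) : swF v (swF v x) = x := by
  unfold swF
  split_ifs <;> omega

/-! ### The multiset `msetOf` via a structural recursion -/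

def msetAuxL (k : ℕ) : List ℕ → List ℕ
  | [] => []
  | m :: t => List.replicate m k ++ msetAuxL (k + 1) t

theorem msetOf_flatMap (ms : List ℕ) :
    ∀ k : ℕ, ((List.range ms.length).flatMap fun i => List.replicate (ms.getD i 0) (i + k))
      = msetAuxL k ms := by
  induction ms with
  | nil => intro k; rfl
  | cons m t ih =>
    intro k
    rw [show (m :: t).length = t.length + 1 from rfl, List.range_succ_eq_map,
      List.flatMap_cons, List.flatMap_map]
    have e : (fun i => List.replicate ((m :: t).getD (Nat.succ i) 0) (Nat.succ i + k))
        = fun i => List.replicate (t.getD i 0) (i + (k + 1)) := by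
      funext i
      rw [List.getD_cons_succ]
      congr 1
      omega
    rw [e, ih (k + 1)]
    show List.replicate ((m :: t).getD 0 0) (0 + k) ++ _ = _
    rw [show (m :: t).getD 0 0 = m from rfl, Nat.zero_add]
    rfl

theorem msetOf_eq (ms : List ℕ) : msetOf ms = ((msetAuxL 1 ms : List ℕ) : Multiset ℕ) := by
  rw [msetOf, msetOf_flatMap ms 1]

theorem msetAuxL_append : ∀ (p : List ℕ) (k : ℕ) (r : List ℕ),
    msetAuxL k (p ++ r) = msetAuxL k p ++ msetAuxL (k + p.length) r
  | [], k, r => by simp [msetAuxL]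
  | m :: p, k, r => by
    show List.replicate m k ++ msetAuxL (k + 1) (p ++ r)
      = (List.replicate m k ++ msetAuxL (k + 1) p) ++ msetAuxL (k + (m :: p).length) r
    rw [msetAuxL_append p (k + 1) r, List.append_assoc,
      show k + (m :: p).length = k + 1 + p.length by simp only [List.length_cons]; omega]

theorem msetAuxL_mem : ∀ (t : List ℕ) (k x : ℕ), x ∈ msetAuxL k t → k ≤ x ∧ x < k + t.length
  | [], k, x, h => by simp [msetAuxL] at h
  | m :: t, k, x, h => by
    simp only [msetAuxL, List.mem_append, List.mem_replicate] at h
    rcases h with ⟨-, rfl⟩ | h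
    · simp only [List.length_cons]
      omega
    · have := msetAuxL_mem t (k + 1) x h
      simp only [List.length_cons]
      omega

theorem map_fix {f : ℕ → ℕ} {s : Multiset ℕ} (h : ∀ x ∈ s, f x = x) :
    Multiset.map f s = s := by
  have : Multiset.map f s = Multiset.map id s := Multiset.map_congr rfl h
  rw [this, Multiset.map_id]

theorem msetOf_swap (p q : List ℕ) (a b : ℕ) :
    Multiset.map (swF (1 + p.length)) (msetOf (p ++ a :: b :: q)) = msetOf (p ++ b :: a :: q) := by
  set v := 1 + p.length with hv
  have key : ∀ x y : ℕ, msetOf (p ++ x :: y :: q) =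
      ((msetAuxL 1 p : List ℕ) : Multiset ℕ) + (Multiset.replicate x v +
        (Multiset.replicate y (v + 1) + ((msetAuxL (v + 1 + 1) q : List ℕ) : Multiset ℕ))) := by
    intro x y
    rw [msetOf_eq, msetAuxL_append p 1 (x :: y :: q)]
    show ((msetAuxL 1 p ++ (List.replicate x v ++ (List.replicate y (v + 1)
      ++ msetAuxL (v + 1 + 1) q)) : List ℕ) : Multiset ℕ) = _
    push_cast
    try simp [Multiset.coe_replicate]
    try rfl
  have fixp : ∀ x ∈ ((msetAuxL 1 p : List ℕ) : Multiset ℕ), swF v x = x := by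
    intro x hx
    have := msetAuxL_mem p 1 x (by simpa using hx)
    unfold swF
    split_ifs <;> omega
  have fixq : ∀ x ∈ ((msetAuxL (v + 1 + 1) q : List ℕ) : Multiset ℕ), swF v x = x := by
    intro x hx
    have := msetAuxL_mem q (v + 1 + 1) x (by simpa using hx)
    unfold swF
    split_ifs <;> omega
  rw [key a b, key b a]
  rw [Multiset.map_add, Multiset.map_add, Multiset.map_add, map_fix fixp, map_fix fixq,
    Multiset.map_replicate, Multiset.map_replicate]
  have h1 : swF v v = v + 1 := by simp [swF]
  have h2 : swF v (v + 1) = v := by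
    unfold swF
    split_ifs <;> omega
  rw [h1, h2]
  rw [add_left_comm (Multiset.replicate a (v + 1)) (Multiset.replicate b v)]

theorem mem_arrangements {M : Multiset ℕ} {w : List ℕ} :
    w ∈ arrangements M ↔ (w : Multiset ℕ) = M := by
  rw [arrangements, List.mem_dedup, List.mem_permutations, ← Multiset.coe_eq_coe,
    Multiset.coe_toList]

theorem Auni_eq_sum (ms : List ℕ) :
    Auni ms = (Multiset.map (fun w => (Polynomial.X : Polynomial ℚ) ^ des w)
      ((arrangements (msetOf ms) : List (List ℕ)) : Multiset (List ℕ))).sum := by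
  rw [Auni, Multiset.map_coe, Multiset.sum_coe]

theorem Auni_swap (p q : List ℕ) (a b : ℕ) :
    Auni (p ++ a :: b :: q) = Auni (p ++ b :: a :: q) := by
  have hv1 : 1 ≤ 1 + p.length := by omega
  set v := 1 + p.length with hv
  have hM := msetOf_swap p q a b
  rw [← hv] at hM
  set M₁ := msetOf (p ++ a :: b :: q) with hM₁
  set M₂ := msetOf (p ++ b :: a :: q) with hM₂
  have hM' : Multiset.map (swF v) M₂ = M₁ := by
    rw [← hM, Multiset.map_map]
    have e : Multiset.map (swF v ∘ swF v) M₁ = Multiset.map id M₁ :=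
      Multiset.map_congr rfl (fun x _ => swF_swF v x)
    rw [e, Multiset.map_id]
  have hphi : ∀ w : List ℕ, phi v (phi v w) = w := fun w => phi_phi v w.length w le_rfl
  have hinj : Function.Injective (phi v) := Function.LeftInverse.injective hphi
  have hcont : ∀ w : List ℕ, ((phi v w : List ℕ) : Multiset ℕ)
      = Multiset.map (swF v) (w : Multiset ℕ) :=
    fun w => phi_content v w.length w le_rfl
  have harr : ((arrangements M₂ : List (List ℕ)) : Multiset (List ℕ))
      = Multiset.map (phi v) ((arrangements M₁ : List (List ℕ)) : Multiset (List ℕ)) := by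
    have nd₂ : ((arrangements M₂ : List (List ℕ)) : Multiset (List ℕ)).Nodup :=
      Multiset.coe_nodup.mpr (List.nodup_dedup _)
    have nd₁ : ((arrangements M₁ : List (List ℕ)) : Multiset (List ℕ)).Nodup :=
      Multiset.coe_nodup.mpr (List.nodup_dedup _)
    refine (Multiset.Nodup.ext nd₂ (nd₁.map hinj)).mpr ?_
    intro x
    constructor
    · intro hx
      rw [Multiset.mem_coe, mem_arrangements] at hx
      rw [Multiset.mem_map]
      refine ⟨phi v x, ?_, hphi x⟩
      rw [Multiset.mem_coe, mem_arrangements, hcont, hx, hM']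
    · intro hx
      rw [Multiset.mem_map] at hx
      obtain ⟨w, hw, rfl⟩ := hx
      rw [Multiset.mem_coe, mem_arrangements] at hw ⊢
      rw [hcont, hw, hM]
  rw [Auni_eq_sum, Auni_eq_sum, ← hM₁, ← hM₂, harr, Multiset.map_map]
  congr 1
  refine Multiset.map_congr rfl ?_
  intro x _
  show (Polynomial.X : Polynomial ℚ) ^ des x = Polynomial.X ^ des (phi v x)
  rw [des_phi' v hv1 x]

theorem Auni_move_front : ∀ (l₁ pr : List ℕ) (a : ℕ) (l₂ : List ℕ),
    Auni ((pr ++ l₁) ++ a :: l₂) = Auni (pr ++ a :: (l₁ ++ l₂))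
  | [], pr, a, l₂ => by simp
  | x :: t, pr, a, l₂ => by
    have ih := Auni_move_front t (pr ++ [x]) a l₂
    have e1 : (pr ++ x :: t) ++ a :: l₂ = ((pr ++ [x]) ++ t) ++ a :: l₂ := by simp
    have e2 : (pr ++ [x]) ++ a :: (t ++ l₂) = pr ++ x :: a :: (t ++ l₂) := by simp
    rw [e1, ih, e2, Auni_swap pr (t ++ l₂) x a]
    rfl

theorem Auni_perm_prefix : ∀ (ms' ms pr : List ℕ), ms.Perm ms' →
    Auni (pr ++ ms) = Auni (pr ++ ms')
  | [], ms, pr, h => by rw [h.eq_nil]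
  | a :: t', ms, pr, h => by
    have ha : a ∈ ms := h.mem_iff.mpr (List.mem_cons_self (a := a) (l := t'))
    obtain ⟨l₁, l₂, rfl⟩ := List.append_of_mem ha
    have h2 : (l₁ ++ l₂).Perm t' :=
      (List.perm_cons a).mp (List.perm_middle.symm.trans h)
    have ih := Auni_perm_prefix t' (l₁ ++ l₂) (pr ++ [a]) h2
    calc Auni (pr ++ (l₁ ++ a :: l₂)) = Auni ((pr ++ l₁) ++ a :: l₂) := by
          rw [List.append_assoc]
      _ = Auni (pr ++ a :: (l₁ ++ l₂)) := Auni_move_front l₁ pr a l₂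
      _ = Auni ((pr ++ [a]) ++ (l₁ ++ l₂)) := by simp
      _ = Auni ((pr ++ [a]) ++ t') := ih
      _ = Auni (pr ++ a :: t') := by simp

theorem Auni_perm_invariant (ms ms' : List ℕ) (h : ms.Perm ms') :
    Auni ms = Auni ms' := by
  have := Auni_perm_prefix ms' ms [] h
  simpa using this
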